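/- For every δ ∈ (0,1) and every k ∈ {1,…,n−2}: if ε* ∈ (0,1) satisfies (d/dε)[D1(ε;k) + D2(ε;k)] = 0 at ε = ε*, then D1(ε*;k+1) + D2(ε*;k+1) = D1(ε*;k) + D2(ε*;k). That is, the curve for tolerance level k+1 passes exactly through the critical point of the curve for tolerance level k. -/

import Mathlib

open Finset

/-- `D1(ε;k) = ((1−δ)/C(n−1,n−k−1))·ε^{−(n−k−1)}·(1−ε)^{−(k+1)}`. -/
noncomputable def D1 (n k : ℕ) (δ ε : ℝ) : ℝ :=
  ((1 - δ) / ((n - 1).choose (n - k - 1) : ℝ)) * (ε ^ (n - k - 1))⁻¹ *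
    ((1 - ε) ^ (k + 1))⁻¹

/-- `D2(ε;k) = δ·Σ_{q=0}^{k} (C(n−1,n−k−1+q)/C(n−1,n−k−1))·ε^q·(1−ε)^{−(q+1)}`. -/
noncomputable def D2 (n k : ℕ) (δ ε : ℝ) : ℝ :=
  δ * ∑ q ∈ range (k + 1),
    (((n - 1).choose (n - k - 1 + q) : ℝ) / ((n - 1).choose (n - k - 1) : ℝ)) *
      ε ^ q * ((1 - ε) ^ (q + 1))⁻¹

lemma tele_core (n k M : ℕ) (hMk : M + k + 1 = n) (x : ℝ) (hx1 : (1:ℝ) - x ≠ 0) :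
    ∑ q ∈ range (k + 1), ((n - 1).choose (M + q) : ℝ) *
        ((((M : ℝ) + q) - ((M : ℝ) + k) * x) * (x ^ q * ((1 - x) ^ (q + 1))⁻¹))
      = (M : ℝ) * ((n - 1).choose M : ℝ) := by
  have hpow : ((1:ℝ) - x) ^ (k + 1) ≠ 0 := pow_ne_zero _ hx1
  apply mul_left_cancel₀ hpow
  rw [Finset.mul_sum]
  have step : ∀ q ∈ range (k + 1),
      (1 - x) ^ (k + 1) * (((n - 1).choose (M + q) : ℝ) *
        ((((M : ℝ) + q) - ((M : ℝ) + k) * x) * (x ^ q * ((1 - x) ^ (q + 1))⁻¹)))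
      = (fun q => ((n - 1).choose (M + q) : ℝ) * (((M : ℝ) + q) * (x ^ q * (1 - x) ^ (k + 1 - q)))) q
        - (fun q => ((n - 1).choose (M + q) : ℝ) * (((M : ℝ) + q) * (x ^ q * (1 - x) ^ (k + 1 - q)))) (q + 1) := by
    intro q hq
    simp only [mem_range] at hq
    have hqk : q ≤ k := by omega
    have hch : ((n - 1).choose (M + q + 1) : ℝ) * ((M : ℝ) + q + 1)
        = ((n - 1).choose (M + q) : ℝ) * ((k : ℝ) - q) := by
      have h := Nat.choose_succ_right_eq (n - 1) (M + q)
      have h2 : n - 1 - (M + q) = k - q := by omega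
      rw [h2] at h
      have h3 := congrArg (Nat.cast (R := ℝ)) h
      push_cast [Nat.cast_sub hqk] at h3
      linarith [h3]
    have e1 : k + 1 - q = (k - q) + 1 := by omega
    have e2 : k + 1 - (q + 1) = k - q := by omega
    have hsplit : ((1:ℝ) - x) ^ (k + 1) = (1 - x) ^ (q + 1) * (1 - x) ^ (k - q) := by
      rw [← pow_add]; congr 1; omega
    have hinv : ((1:ℝ) - x) ^ (q + 1) * ((1 - x) ^ (q + 1))⁻¹ = 1 :=
      mul_inv_cancel₀ (pow_ne_zero _ hx1)
    simp only [e1, e2, hsplit]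
    have hL : ((1:ℝ) - x) ^ (q + 1) * (1 - x) ^ (k - q) * (((n - 1).choose (M + q) : ℝ) *
          ((((M : ℝ) + q) - ((M : ℝ) + k) * x) * (x ^ q * ((1 - x) ^ (q + 1))⁻¹)))
        = (1 - x) ^ (k - q) * (((n - 1).choose (M + q) : ℝ) *
          ((((M : ℝ) + q) - ((M : ℝ) + k) * x) * x ^ q)) := by
      calc ((1:ℝ) - x) ^ (q + 1) * (1 - x) ^ (k - q) * (((n - 1).choose (M + q) : ℝ) *
          ((((M : ℝ) + q) - ((M : ℝ) + k) * x) * (x ^ q * ((1 - x) ^ (q + 1))⁻¹)))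
          = (((1:ℝ) - x) ^ (q + 1) * ((1 - x) ^ (q + 1))⁻¹) * ((1 - x) ^ (k - q) *
            (((n - 1).choose (M + q) : ℝ) * ((((M : ℝ) + q) - ((M : ℝ) + k) * x) * x ^ q))) := by
            ring
        _ = _ := by rw [hinv, one_mul]
    rw [hL]
    push_cast
    linear_combination (norm := ring_nf) (x ^ (q + 1) * (1 - x) ^ (k - q)) * hch
  rw [Finset.sum_congr rfl step, Finset.sum_range_sub']
  have hz : (n - 1).choose (M + (k + 1)) = 0 :=
    Nat.choose_eq_zero_of_lt (by omega)
  simp only [hz, Nat.cast_zero, zero_mul, sub_zero, Nat.add_zero, pow_zero, Nat.cast_add]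
  push_cast
  ring

lemma key_sum (n k M : ℕ) (hMk : M + k + 1 = n) (x : ℝ) (hx1 : (1:ℝ) - x ≠ 0) :
    ∑ q ∈ range (k + 1), ((n - 1).choose (M + q) : ℝ) *
        (((q : ℝ) + x) * (x ^ q * ((1 - x) ^ (q + 1))⁻¹))
      = (M : ℝ) * ((n - 1).choose M : ℝ)
        + (((M : ℝ) + k + 1) * x - M) *
          ∑ q ∈ range (k + 1), ((n - 1).choose (M + q) : ℝ) * (x ^ q * ((1 - x) ^ (q + 1))⁻¹) := by
  have expand : ∀ q ∈ range (k + 1),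
      ((n - 1).choose (M + q) : ℝ) * (((q : ℝ) + x) * (x ^ q * ((1 - x) ^ (q + 1))⁻¹))
      = ((n - 1).choose (M + q) : ℝ) *
          ((((M : ℝ) + q) - ((M : ℝ) + k) * x) * (x ^ q * ((1 - x) ^ (q + 1))⁻¹))
        + (((M : ℝ) + k + 1) * x - M) *
          (((n - 1).choose (M + q) : ℝ) * (x ^ q * ((1 - x) ^ (q + 1))⁻¹)) := by
    intro q _; ring
  rw [Finset.sum_congr rfl expand, Finset.sum_add_distrib, tele_core n k M hMk x hx1,
    ← Finset.mul_sum]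

/-- For every `δ ∈ (0,1)` and `k ∈ {1,…,n−2}`: if `ε* ∈ (0,1)` is a critical
point of `ε ↦ D1(ε;k) + D2(ε;k)`, then the curve for tolerance level `k+1`
passes exactly through that point:
`D1(ε*;k+1) + D2(ε*;k+1) = D1(ε*;k) + D2(ε*;k)`. -/
theorem curves_meet_at_critical_point (n : ℕ) (hn : 3 ≤ n)
    (δ : ℝ) (hδ0 : 0 < δ) (hδ1 : δ < 1)
    (k : ℕ) (hk1 : 1 ≤ k) (hk2 : k ≤ n - 2)
    (εstar : ℝ) (hε : εstar ∈ Set.Ioo (0 : ℝ) 1)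
    (hcrit : deriv (fun ε => D1 n k δ ε + D2 n k δ ε) εstar = 0) :
    D1 n (k + 1) δ εstar + D2 n (k + 1) δ εstar =
      D1 n k δ εstar + D2 n k δ εstar := by
  obtain ⟨hx0, hx1⟩ := hε
  set x := εstar with hxdef
  have h1x : (0:ℝ) < 1 - x := by linarith
  have hxne : x ≠ 0 := ne_of_gt hx0
  have h1xne : (1:ℝ) - x ≠ 0 := ne_of_gt h1x
  obtain ⟨M, hM1, hMk⟩ : ∃ M, 1 ≤ M ∧ M + k + 1 = n := ⟨n - k - 1, by omega, by omega⟩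
  have hMeq : n - k - 1 = M := by omega
  have hM' : n - (k + 1) - 1 = M - 1 := by omega
  have hCpos : (0:ℝ) < ((n - 1).choose M : ℝ) := by
    exact_mod_cast Nat.choose_pos (by omega : M ≤ n - 1)
  have hC'pos : (0:ℝ) < ((n - 1).choose (M - 1) : ℝ) := by
    exact_mod_cast Nat.choose_pos (by omega : M - 1 ≤ n - 1)
  have hCne : ((n - 1).choose M : ℝ) ≠ 0 := ne_of_gt hCpos
  have hC'ne : ((n - 1).choose (M - 1) : ℝ) ≠ 0 := ne_of_gt hC'pos
  have hM0 : ((M : ℝ)) ≠ 0 := Nat.cast_ne_zero.mpr (by omega)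
  have hccM : ((n - 1).choose M : ℝ) * M = ((n - 1).choose (M - 1) : ℝ) * ((k : ℝ) + 1) := by
    have h := Nat.choose_succ_right_eq (n - 1) (M - 1)
    have e : M - 1 + 1 = M := by omega
    have e2 : n - 1 - (M - 1) = k + 1 := by omega
    rw [e, e2] at h
    exact_mod_cast h
  have hC'eq : ((n - 1).choose (M - 1) : ℝ) = ((n - 1).choose M : ℝ) * (M : ℝ) / ((k : ℝ) + 1) := by
    rw [eq_div_iff (by positivity)]
    linarith [hccM]
  have hxM : x ^ M = x ^ (M - 1) * x := by
    have h := pow_succ x (M - 1)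
    rw [show M - 1 + 1 = M from by omega] at h
    exact h
  -- derivative of ε ↦ ((1-ε)^j)⁻¹
  have hinvp : ∀ j : ℕ, HasDerivAt (fun ε : ℝ => ((1 - ε) ^ j)⁻¹)
      (-((j : ℝ) * (1 - x) ^ (j - 1) * (-1)) / ((1 - x) ^ j) ^ 2) x := fun j =>
    (((hasDerivAt_id' x).const_sub 1).pow j).inv (pow_ne_zero _ h1xne)
  -- rewrite the critical-point function
  have hfun : (fun ε => D1 n k δ ε + D2 n k δ ε)
      = fun ε => (1 - δ) / ((n - 1).choose M : ℝ) * (ε ^ M)⁻¹ * ((1 - ε) ^ (k + 1))⁻¹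
          + δ * ∑ q ∈ range (k + 1),
              ((n - 1).choose (M + q) : ℝ) / ((n - 1).choose M : ℝ) * ε ^ q *
                ((1 - ε) ^ (q + 1))⁻¹ := by
    funext ε
    simp only [D1, D2, hMeq]
  rw [hfun] at hcrit
  -- derivative of D1-part, in clean form
  have hD1' : HasDerivAt
      (fun ε : ℝ => (1 - δ) / ((n - 1).choose M : ℝ) * (ε ^ M)⁻¹ * ((1 - ε) ^ (k + 1))⁻¹)
      ((1 - δ) / ((n - 1).choose M : ℝ) *
        (((((M : ℝ) + k + 1) * x - M)) * (x ^ (M - 1) * ((x ^ M) ^ 2)⁻¹ *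
          ((1 - x) ^ (k + 2))⁻¹))) x := by
    have h := (((hasDerivAt_pow M x).inv (pow_ne_zero _ hxne)).const_mul
      ((1 - δ) / ((n - 1).choose M : ℝ))).mul (hinvp (k + 1))
    refine h.congr_deriv ?_
    symm
    simp only [Nat.add_sub_cancel, Pi.inv_apply]
    push_cast
    rw [hxM]
    field_simp
    ring
  -- derivative of D2-part, in clean form
  have hterm : ∀ q ∈ range (k + 1),
      HasDerivAt
        (fun ε : ℝ => ((n - 1).choose (M + q) : ℝ) / ((n - 1).choose M : ℝ) * ε ^ q *
          ((1 - ε) ^ (q + 1))⁻¹)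
        (((n - 1).choose (M + q) : ℝ) / ((n - 1).choose M : ℝ) *
          (((q : ℝ) * x ^ (q - 1)) * ((1 - x) ^ (q + 1))⁻¹
            + ((q : ℝ) + 1) * x ^ q * ((1 - x) ^ (q + 2))⁻¹)) x := by
    intro q _
    have h := ((hasDerivAt_pow q x).const_mul
      (((n - 1).choose (M + q) : ℝ) / ((n - 1).choose M : ℝ))).mul (hinvp (q + 1))
    refine h.congr_deriv ?_
    symm
    simp only [Nat.add_sub_cancel]
    push_cast
    field_simp
    ring
  have hD2' : HasDerivAt
      (fun ε : ℝ => δ * ∑ q ∈ range (k + 1),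
        ((n - 1).choose (M + q) : ℝ) / ((n - 1).choose M : ℝ) * ε ^ q * ((1 - ε) ^ (q + 1))⁻¹)
      (δ * ∑ q ∈ range (k + 1),
        ((n - 1).choose (M + q) : ℝ) / ((n - 1).choose M : ℝ) *
          (((q : ℝ) * x ^ (q - 1)) * ((1 - x) ^ (q + 1))⁻¹
            + ((q : ℝ) + 1) * x ^ q * ((1 - x) ^ (q + 2))⁻¹)) x :=
    (HasDerivAt.fun_sum hterm).const_mul δ
  have hE : (1 - δ) / ((n - 1).choose M : ℝ) *
        (((((M : ℝ) + k + 1) * x - M)) * (x ^ (M - 1) * ((x ^ M) ^ 2)⁻¹ *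
          ((1 - x) ^ (k + 2))⁻¹))
      + δ * ∑ q ∈ range (k + 1),
        ((n - 1).choose (M + q) : ℝ) / ((n - 1).choose M : ℝ) *
          (((q : ℝ) * x ^ (q - 1)) * ((1 - x) ^ (q + 1))⁻¹
            + ((q : ℝ) + 1) * x ^ q * ((1 - x) ^ (q + 2))⁻¹) = 0 :=
    ((hD1'.add hD2').deriv).symm.trans hcrit
  -- the sum S
  set S := ∑ q ∈ range (k + 1), ((n - 1).choose (M + q) : ℝ) * (x ^ q * ((1 - x) ^ (q + 1))⁻¹)
    with hS
  -- x(1-x)·(derivative sum) in terms of S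
  have hSig : x * (1 - x) * (∑ q ∈ range (k + 1),
        ((n - 1).choose (M + q) : ℝ) / ((n - 1).choose M : ℝ) *
          (((q : ℝ) * x ^ (q - 1)) * ((1 - x) ^ (q + 1))⁻¹
            + ((q : ℝ) + 1) * x ^ q * ((1 - x) ^ (q + 2))⁻¹))
      = (((n - 1).choose M : ℝ))⁻¹ *
          ((M : ℝ) * ((n - 1).choose M : ℝ) + (((M : ℝ) + k + 1) * x - M) * S) := by
    have hks := key_sum n k M hMk x h1xne
    rw [← hS] at hks
    rw [Finset.mul_sum]
    calc ∑ q ∈ range (k + 1), x * (1 - x) *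
          (((n - 1).choose (M + q) : ℝ) / ((n - 1).choose M : ℝ) *
            (((q : ℝ) * x ^ (q - 1)) * ((1 - x) ^ (q + 1))⁻¹
              + ((q : ℝ) + 1) * x ^ q * ((1 - x) ^ (q + 2))⁻¹))
        = ∑ q ∈ range (k + 1), (((n - 1).choose M : ℝ))⁻¹ *
            (((n - 1).choose (M + q) : ℝ) *
              (((q : ℝ) + x) * (x ^ q * ((1 - x) ^ (q + 1))⁻¹))) := by
          refine Finset.sum_congr rfl fun q _ => ?_
          have e2 : (q : ℝ) * x ^ (q - 1) * x = (q : ℝ) * x ^ q := by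
            cases q with
            | zero => simp
            | succ p =>
                rw [Nat.succ_sub_one]
                push_cast
                rw [pow_succ]
                ring
          have e3 : (1 - x) * ((1 - x) ^ (q + 2))⁻¹ = ((1 - x) ^ (q + 1))⁻¹ := by
            rw [pow_succ, mul_inv]
            field_simp
          calc x * (1 - x) *
                (((n - 1).choose (M + q) : ℝ) / ((n - 1).choose M : ℝ) *
                  (((q : ℝ) * x ^ (q - 1)) * ((1 - x) ^ (q + 1))⁻¹
                    + ((q : ℝ) + 1) * x ^ q * ((1 - x) ^ (q + 2))⁻¹))
              = ((n - 1).choose (M + q) : ℝ) / ((n - 1).choose M : ℝ) *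
                  (((q : ℝ) * x ^ (q - 1) * x) * ((1 - x) * ((1 - x) ^ (q + 1))⁻¹)
                    + ((q : ℝ) + 1) * (x ^ q * x) * ((1 - x) * ((1 - x) ^ (q + 2))⁻¹)) := by
                ring
            _ = ((n - 1).choose (M + q) : ℝ) / ((n - 1).choose M : ℝ) *
                  (((q : ℝ) * x ^ q) * ((1 - x) * ((1 - x) ^ (q + 1))⁻¹)
                    + ((q : ℝ) + 1) * (x ^ q * x) * ((1 - x) ^ (q + 1))⁻¹) := by
                rw [e2, e3]
            _ = (((n - 1).choose M : ℝ))⁻¹ *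
                  (((n - 1).choose (M + q) : ℝ) *
                    (((q : ℝ) + x) * (x ^ q * ((1 - x) ^ (q + 1))⁻¹))) := by
                ring
      _ = (((n - 1).choose M : ℝ))⁻¹ * ∑ q ∈ range (k + 1),
            ((n - 1).choose (M + q) : ℝ) *
              (((q : ℝ) + x) * (x ^ q * ((1 - x) ^ (q + 1))⁻¹)) := by
          rw [Finset.mul_sum]
      _ = (((n - 1).choose M : ℝ))⁻¹ *
            ((M : ℝ) * ((n - 1).choose M : ℝ) + (((M : ℝ) + k + 1) * x - M) * S) := by
          rw [hks]
  -- final assembly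
  have hk0 : ((k : ℝ) + 1) ≠ 0 := by positivity
  have hxMne : x ^ (M - 1) ≠ 0 := pow_ne_zero _ hxne
  have hRS : ∑ q ∈ range (k + 1),
        ((n - 1).choose (M + q) : ℝ) / ((n - 1).choose M : ℝ) * x ^ q * ((1 - x) ^ (q + 1))⁻¹
      = (((n - 1).choose M : ℝ))⁻¹ * S := by
    rw [hS, Finset.mul_sum]
    exact Finset.sum_congr rfl fun q _ => by ring
  have hshift : ∑ q ∈ range (k + 1),
        ((n - 1).choose (M + q) : ℝ) / ((n - 1).choose (M - 1) : ℝ) * x ^ (q + 1) *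
          ((1 - x) ^ (q + 1 + 1))⁻¹
      = x * (1 - x)⁻¹ * (((n - 1).choose (M - 1) : ℝ))⁻¹ * S := by
    rw [hS, Finset.mul_sum]
    refine Finset.sum_congr rfl fun q _ => ?_
    simp only [pow_succ, mul_inv]
    ring
  simp only [D1, D2, hM', hMeq]
  rw [← sub_eq_zero]
  rw [Finset.sum_range_succ']
  simp only [show ∀ q, M - 1 + (q + 1) = M + q from fun q => by omega,
    Nat.add_zero, pow_zero, mul_one, zero_add, pow_one]
  rw [div_self hC'ne, one_mul, hshift, hRS]
  apply mul_left_cancel₀ (show ((M : ℝ)) * (1 - x) ≠ 0 from mul_ne_zero hM0 h1xne)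
  have h2 : x * (1 - x) *
        ((1 - δ) / ((n - 1).choose M : ℝ) *
            (((((M : ℝ) + k + 1) * x - M)) * (x ^ (M - 1) * ((x ^ M) ^ 2)⁻¹ *
              ((1 - x) ^ (k + 2))⁻¹))
          + δ * ∑ q ∈ range (k + 1),
              ((n - 1).choose (M + q) : ℝ) / ((n - 1).choose M : ℝ) *
                (((q : ℝ) * x ^ (q - 1)) * ((1 - x) ^ (q + 1))⁻¹
                  + ((q : ℝ) + 1) * x ^ q * ((1 - x) ^ (q + 2))⁻¹))
      = x * (1 - x) *
          ((1 - δ) / ((n - 1).choose M : ℝ) *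
            (((((M : ℝ) + k + 1) * x - M)) * (x ^ (M - 1) * ((x ^ M) ^ 2)⁻¹ *
              ((1 - x) ^ (k + 2))⁻¹)))
        + δ * ((((n - 1).choose M : ℝ))⁻¹ *
            ((M : ℝ) * ((n - 1).choose M : ℝ) + (((M : ℝ) + k + 1) * x - M) * S)) := by
    rw [← hSig]; ring
  calc ((M : ℝ)) * (1 - x) *
        ((1 - δ) / ((n - 1).choose (M - 1) : ℝ) * (x ^ (M - 1))⁻¹ * ((1 - x) ^ (k + 1 + 1))⁻¹
            + δ * (x * (1 - x)⁻¹ * (((n - 1).choose (M - 1) : ℝ))⁻¹ * S + (1 - x)⁻¹)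
          - ((1 - δ) / ((n - 1).choose M : ℝ) * (x ^ M)⁻¹ * ((1 - x) ^ (k + 1))⁻¹
            + δ * ((((n - 1).choose M : ℝ))⁻¹ * S)))
      = x * (1 - x) *
          ((1 - δ) / ((n - 1).choose M : ℝ) *
              (((((M : ℝ) + k + 1) * x - M)) * (x ^ (M - 1) * ((x ^ M) ^ 2)⁻¹ *
                ((1 - x) ^ (k + 2))⁻¹))
            + δ * ∑ q ∈ range (k + 1),
                ((n - 1).choose (M + q) : ℝ) / ((n - 1).choose M : ℝ) *
                  (((q : ℝ) * x ^ (q - 1)) * ((1 - x) ^ (q + 1))⁻¹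
                    + ((q : ℝ) + 1) * x ^ q * ((1 - x) ^ (q + 2))⁻¹)) := by
        rw [h2, hC'eq, hxM]
        field_simp
        ring
    _ = ((M : ℝ)) * (1 - x) * 0 := by rw [hE]; ring
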